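/- Let R be a commutative ring with unity and consider a commutative diagram of R-modules with exact rows: A1 → A2 → A3 → A4 → A5 (maps α1,...,α4) and B1 → B2 → B3 → B4 → B5 (maps β1,...,β4), with vertical maps f1,...,f5 making all squares commute. If f1 and f4 are isomorphisms and f5 is injective, then (B3, f3, β2) is the pushout of the pair of maps α2 : A2 → A3 and f2 : A2 → B2. -/
import Mathlib


/-- Five lemma type pushout lemma: in a commutative ladder of `R`-modules with exact rows,
if `f1` and `f4` are isomorphisms and `f5` is injective, then `(B3, f3, β2)` is the pushout
of `α2 : A2 → A3` and `f2 : A2 → B2`. -/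
theorem stmt0 {R : Type*} [CommRing R]
    {A1 A2 A3 A4 A5 B1 B2 B3 B4 B5 : Type*}
    [AddCommGroup A1] [Module R A1] [AddCommGroup A2] [Module R A2]
    [AddCommGroup A3] [Module R A3] [AddCommGroup A4] [Module R A4]
    [AddCommGroup A5] [Module R A5]
    [AddCommGroup B1] [Module R B1] [AddCommGroup B2] [Module R B2]
    [AddCommGroup B3] [Module R B3] [AddCommGroup B4] [Module R B4]
    [AddCommGroup B5] [Module R B5]
    (α1 : A1 →ₗ[R] A2) (α2 : A2 →ₗ[R] A3) (α3 : A3 →ₗ[R] A4) (α4 : A4 →ₗ[R] A5)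
    (β1 : B1 →ₗ[R] B2) (β2 : B2 →ₗ[R] B3) (β3 : B3 →ₗ[R] B4) (β4 : B4 →ₗ[R] B5)
    (f1 : A1 →ₗ[R] B1) (f2 : A2 →ₗ[R] B2) (f3 : A3 →ₗ[R] B3)
    (f4 : A4 →ₗ[R] B4) (f5 : A5 →ₗ[R] B5)
    (hA12 : Function.Exact α1 α2) (hA23 : Function.Exact α2 α3)
    (hA34 : Function.Exact α3 α4)
    (hB12 : Function.Exact β1 β2) (hB23 : Function.Exact β2 β3)
    (hB34 : Function.Exact β3 β4)
    (hsq1 : β1 ∘ₗ f1 = f2 ∘ₗ α1) (hsq2 : β2 ∘ₗ f2 = f3 ∘ₗ α2)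
    (hsq3 : β3 ∘ₗ f3 = f4 ∘ₗ α3) (hsq4 : β4 ∘ₗ f4 = f5 ∘ₗ α4)
    (hf1 : Function.Bijective f1) (hf4 : Function.Bijective f4)
    (hf5 : Function.Injective f5) :
    f3 ∘ₗ α2 = β2 ∘ₗ f2 ∧
    ∀ (Y : Type*) [AddCommGroup Y] [Module R Y] (a : A3 →ₗ[R] Y) (b : B2 →ₗ[R] Y),
      a ∘ₗ α2 = b ∘ₗ f2 →
      ∃! φ : B3 →ₗ[R] Y, φ ∘ₗ f3 = a ∧ φ ∘ₗ β2 = b := by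
  refine ⟨hsq2.symm, ?_⟩
  intro Y _ _ a b hab
  have hab' : ∀ z, a (α2 z) = b (f2 z) := fun z => LinearMap.congr_fun hab z
  set p : A3 × B2 →ₗ[R] B3 := f3.coprod β2 with hpdef
  have hp : Function.Surjective p := by
    intro b3
    obtain ⟨a4, ha4⟩ := hf4.2 (β3 b3)
    have h5 : f5 (α4 a4) = 0 := by
      have := LinearMap.congr_fun hsq4 a4
      simp only [LinearMap.coe_comp, Function.comp_apply] at this
      rw [← this, ha4, (hB34 (β3 b3)).mpr ⟨b3, rfl⟩]
    have h40 : α4 a4 = 0 := hf5 (by rw [h5, map_zero])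
    obtain ⟨a3, ha3⟩ := (hA34 a4).mp h40
    have h33 : β3 (f3 a3) = β3 b3 := by
      have := LinearMap.congr_fun hsq3 a3
      simp only [LinearMap.coe_comp, Function.comp_apply] at this
      rw [this, ha3, ha4]
    have : β3 (b3 - f3 a3) = 0 := by rw [map_sub, h33, sub_self]
    obtain ⟨b2, hb2⟩ := (hB23 (b3 - f3 a3)).mp this
    exact ⟨(a3, b2), by simp [hpdef, LinearMap.coprod_apply, hb2]⟩
  have hker : LinearMap.ker p ≤ LinearMap.ker (a.coprod b) := by
    rintro ⟨x, y⟩ h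
    simp only [LinearMap.mem_ker, hpdef, LinearMap.coprod_apply] at h ⊢
    have h30 : β3 (f3 x) = 0 := by
      have : β3 (f3 x + β2 y) = 0 := by rw [h, map_zero]
      rw [map_add, (hB23 (β2 y)).mpr ⟨y, rfl⟩, add_zero] at this
      exact this
    have h40 : f4 (α3 x) = 0 := by
      have := LinearMap.congr_fun hsq3 x
      simp only [LinearMap.coe_comp, Function.comp_apply] at this
      rw [← this, h30]
    have hx0 : α3 x = 0 := by
      have := hf4.1 (by rw [h40, map_zero] : f4 (α3 x) = f4 0)
      exact this
    obtain ⟨a2, ha2⟩ := (hA23 x).mp hx0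
    have hsq2' : β2 (f2 a2) = f3 (α2 a2) := LinearMap.congr_fun hsq2 a2
    have hy : β2 (y + f2 a2) = 0 := by
      rw [map_add, hsq2', ha2]
      rw [← ha2] at h ⊢
      linear_combination (norm := abel) h
    obtain ⟨b1, hb1⟩ := (hB12 (y + f2 a2)).mp hy
    obtain ⟨a1, ha1⟩ := hf1.2 b1
    have hsq1' : β1 (f1 a1) = f2 (α1 a1) := LinearMap.congr_fun hsq1 a1
    have hyval : y = f2 (α1 a1 - a2) := by
      rw [map_sub, ← hsq1', ha1, hb1]; abel
    calc a x + b y = b (f2 a2) + b (f2 (α1 a1 - a2)) := by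
            rw [← ha2, hab' a2, hyval]
      _ = b (f2 (α1 a1)) := by
            have h' : a2 + (α1 a1 - a2) = α1 a1 := by abel
            rw [← map_add, ← map_add, h']
      _ = a (α2 (α1 a1)) := (hab' _).symm
      _ = 0 := by rw [(hA12 (α1 a1)).mpr ⟨a1, rfl⟩, map_zero]
  let e := p.quotKerEquivOfSurjective hp
  set φ : B3 →ₗ[R] Y := (Submodule.liftQ _ (a.coprod b) hker).comp e.symm.toLinearMap
    with hφdef
  have key : ∀ v : A3 × B2, φ (p v) = a v.1 + b v.2 := by
    intro v
    have he : e (Submodule.Quotient.mk v) = p v := rfl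
    have : e.symm (p v) = Submodule.Quotient.mk v := by rw [← he, e.symm_apply_apply]
    simp [hφdef, this, LinearMap.coprod_apply]
  refine ⟨φ, ⟨?_, ?_⟩, ?_⟩
  · ext x
    have := key (x, 0)
    simpa [hpdef, LinearMap.coprod_apply] using this
  · ext y
    have := key (0, y)
    simpa [hpdef, LinearMap.coprod_apply] using this
  · intro ψ ⟨h1, h2⟩
    ext b3
    obtain ⟨v, hv⟩ := hp b3
    have h1' := LinearMap.congr_fun h1 v.1
    have h2' := LinearMap.congr_fun h2 v.2
    simp only [LinearMap.coe_comp, Function.comp_apply] at h1' h2'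
    rw [← hv, key v]
    have : p v = f3 v.1 + β2 v.2 := rfl
    rw [this, map_add, h1', h2']
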